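/- Let n ∈ ℕ, let A : [0,1] → Mₙ(ℂ) be continuous, and let g : [0,1] → Mₙ(ℂ) be a C¹ map taking values in invertible matrices. Define the gauge-transformed coefficient A^g : [0,1] → Mₙ(ℂ) by A^g(t) = g(t)⁻¹·A(t)·g(t) + g(t)⁻¹·g′(t). Then hol(A^g) = g(0)⁻¹ · hol(A) · g(1). In particular, if g(0) = g(1) then Tr(hol(A^g)) = Tr(hol(A)). (This is the gauge-covariance computation at the heart of Proposition A.2, showing the Bismut–Chern–Simons form is independent of the choice of local trivializations.) -/

import Mathlib

attribute [local instance] Matrix.linftyOpNormedAddCommGroup Matrix.linftyOpNormedSpace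
attribute [local instance] Matrix.linftyOpNormedRing Matrix.linftyOpNormedAlgebra

/-- **Gauge covariance of holonomy** (the computation at the heart of
Proposition A.2): if `A^g(t) = g(t)⁻¹·A(t)·g(t) + g(t)⁻¹·g′(t)` is the gauge
transform of `A` by a `C¹` family `g` of invertible matrices, then
`hol(A^g) = g(0)⁻¹ · hol(A) · g(1)`; in particular, if `g(0) = g(1)` then
`Tr(hol(A^g)) = Tr(hol(A))`. -/
theorem holonomy_gauge_covariance (n : ℕ)
    (A : ℝ → Matrix (Fin n) (Fin n) ℂ) (hA : ContinuousOn A (Set.Icc 0 1))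
    (g g' : ℝ → Matrix (Fin n) (Fin n) ℂ)
    (hg : ∀ t ∈ Set.Icc (0:ℝ) 1, HasDerivAt g (g' t) t)
    (hg' : ContinuousOn g' (Set.Icc 0 1))
    (hunit : ∀ t ∈ Set.Icc (0:ℝ) 1, IsUnit (g t))
    (Y Z : ℝ → Matrix (Fin n) (Fin n) ℂ)
    (hY : ∀ t ∈ Set.Icc (0:ℝ) 1, HasDerivAt Y (Y t * A t) t) (hY0 : Y 0 = 1)
    (hZ : ∀ t ∈ Set.Icc (0:ℝ) 1,
      HasDerivAt Z (Z t * ((g t)⁻¹ * A t * g t + (g t)⁻¹ * g' t)) t)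
    (hZ0 : Z 0 = 1) :
    Z 1 = (g 0)⁻¹ * Y 1 * g 1 ∧ (g 0 = g 1 → (Z 1).trace = (Y 1).trace) := by
  set C : ℝ → Matrix (Fin n) (Fin n) ℂ :=
    fun t => (g t)⁻¹ * A t * g t + (g t)⁻¹ * g' t with hCdef
  set W : ℝ → Matrix (Fin n) (Fin n) ℂ := fun t => (g 0)⁻¹ * Y t * g t with hWdef
  -- cancellation facts
  have hginv : ∀ t ∈ Set.Icc (0:ℝ) 1, g t * (g t)⁻¹ = 1 := fun t ht =>
    Matrix.mul_nonsing_inv _ ((Matrix.isUnit_iff_isUnit_det _).mp (hunit t ht))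
  -- W solves the same ODE as Z
  have hW : ∀ t ∈ Set.Icc (0:ℝ) 1, HasDerivAt W (W t * C t) t := by
    intro t ht
    have h1 : HasDerivAt (fun s => Y s * g s) (Y t * A t * g t + Y t * g' t) t :=
      (hY t ht).mul (hg t ht)
    have h2 := h1.const_mul ((g 0)⁻¹)
    have hg2 : ∀ X : Matrix (Fin n) (Fin n) ℂ, g t * ((g t)⁻¹ * X) = X := fun X => by
      rw [← mul_assoc, hginv t ht, one_mul]
    have heq : W t * C t = (g 0)⁻¹ * (Y t * A t * g t + Y t * g' t) := by
      simp only [hWdef, hCdef, mul_add, mul_assoc, hg2]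
    rw [heq]
    rw [hWdef]
    simp only [mul_assoc] at h2 ⊢
    exact h2
  -- Lipschitz bound for the vector field
  have hgC : ContinuousOn g (Set.Icc 0 1) := fun t ht =>
    (hg t ht).continuousAt.continuousWithinAt
  have hgi : ContinuousOn (fun t => (g t)⁻¹) (Set.Icc 0 1) := by
    intro t ht
    obtain ⟨u, hu⟩ := hunit t ht
    have : ContinuousAt Ring.inverse (g t) := hu ▸ NormedRing.inverse_continuousAt u
    have := this.comp_continuousWithinAt (hgC t ht)
    simp only [Matrix.nonsing_inv_eq_ringInverse]
    exact this
  have hC : ContinuousOn C (Set.Icc 0 1) := ((hgi.mul hA).mul hgC).add (hgi.mul hg')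
  obtain ⟨M, hM⟩ := isCompact_Icc.exists_bound_of_continuousOn hC
  set π : ℝ → ℝ := fun t => max 0 (min 1 t) with hπdef
  have hπmem : ∀ t, π t ∈ Set.Icc (0:ℝ) 1 :=
    fun t => ⟨le_max_left _ _, max_le zero_le_one (min_le_left _ _)⟩
  have hπeq : ∀ t ∈ Set.Ico (0:ℝ) 1, π t = t := fun t ht => by
    simp [hπdef, min_eq_right ht.2.le, max_eq_right ht.1]
  set v : ℝ → Matrix (Fin n) (Fin n) ℂ → Matrix (Fin n) (Fin n) ℂ :=
    fun t y => y * C (π t) with hvdef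
  set K : NNReal := ⟨max M 0, le_max_right _ _⟩ with hKdef
  have hv : ∀ t, LipschitzWith K (v t) := by
    intro t
    apply LipschitzWith.of_dist_le_mul
    intro y z
    simp only [dist_eq_norm, hvdef, ← sub_mul]
    calc ‖(y - z) * C (π t)‖ ≤ ‖y - z‖ * ‖C (π t)‖ := norm_mul_le _ _
      _ ≤ ‖y - z‖ * (max M 0) := by
          gcongr
          exact le_max_of_le_left (hM _ (hπmem t))
      _ = (K : ℝ) * ‖y - z‖ := by rw [mul_comm]; rfl
  have hEq : Set.EqOn Z W (Set.Icc 0 1) := by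
    apply ODE_solution_unique (v := v) hv
    · exact fun t ht => (hZ t ht).continuousAt.continuousWithinAt
    · intro t ht
      have := (hZ t (Set.Ico_subset_Icc_self ht)).hasDerivWithinAt (s := Set.Ici t)
      simpa [hvdef, hπeq t ht] using this
    · exact fun t ht => (hW t ht).continuousAt.continuousWithinAt
    · intro t ht
      have := (hW t (Set.Ico_subset_Icc_self ht)).hasDerivWithinAt (s := Set.Ici t)
      simpa [hvdef, hπeq t ht] using this
    · simp [hZ0, hWdef, hY0, Matrix.nonsing_inv_mul _
        ((Matrix.isUnit_iff_isUnit_det _).mp (hunit 0 (by norm_num)))]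
  have h1 : Z 1 = (g 0)⁻¹ * Y 1 * g 1 := hEq (Set.right_mem_Icc.mpr zero_le_one)
  refine ⟨h1, fun hgg => ?_⟩
  rw [h1, hgg, Matrix.trace_mul_comm, ← mul_assoc, hginv 1 (by norm_num), one_mul]
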